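/- Let η₁, η₂ > 0 be real with η₂ ≤ η₁, let σ < 0 be real with -σ = 4πη₁η₂ - 1 > 0, and let m be a nonnegative integer with m ≤ η₁ + η₂ < m+1. Writing |η| = √(η₁² + η₂²), we have |η|^(1-σ)·((m+1)^σ/(-σ) + (m+1)^(σ-1)) ≤ (1 + (η₁+η₂+1)/(4πη₁η₂-1))·exp(-2π·η₁²η₂²/(η₁²+η₂²)). -/
import Mathlib


theorem stmt_14 (η₁ η₂ σ : ℝ) (m : ℕ)
    (h1 : 0 < η₂) (h2 : η₂ ≤ η₁) (hσ : σ < 0)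
    (hσ' : -σ = 4 * Real.pi * η₁ * η₂ - 1)
    (hm1 : (m : ℝ) ≤ η₁ + η₂) (hm2 : η₁ + η₂ < m + 1) :
    Real.sqrt (η₁ ^ 2 + η₂ ^ 2) ^ (1 - σ) *
      (((m : ℝ) + 1) ^ σ / (-σ) + ((m : ℝ) + 1) ^ (σ - 1)) ≤
    (1 + (η₁ + η₂ + 1) / (4 * Real.pi * η₁ * η₂ - 1)) *
      Real.exp (-2 * Real.pi * (η₁ ^ 2 * η₂ ^ 2) / (η₁ ^ 2 + η₂ ^ 2)) := by
  have hπ := Real.pi_pos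
  have h1' : 0 < η₁ := h1.trans_le h2
  have hsum : 0 < η₁ ^ 2 + η₂ ^ 2 := by positivity
  set S := Real.sqrt (η₁ ^ 2 + η₂ ^ 2) with hSdef
  have hS : 0 < S := Real.sqrt_pos.mpr hsum
  have hS2 : S ^ 2 = η₁ ^ 2 + η₂ ^ 2 := Real.sq_sqrt hsum.le
  set x := 2 * η₁ * η₂ / (η₁ ^ 2 + η₂ ^ 2) with hxdef
  have hx0 : 0 < x := by positivity
  have hx1 : x ≤ 1 := by
    rw [hxdef, div_le_one hsum]; nlinarith [sq_nonneg (η₁ - η₂)]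
  have hxS2 : x * S ^ 2 = 2 * η₁ * η₂ := by
    rw [hS2, hxdef]; field_simp
  set s := -σ with hsdef
  have hs : 0 < s := neg_pos.mpr hσ
  have hmpos : (0:ℝ) < (m:ℝ) + 1 := by positivity
  -- exp (x/2) ≤ 1 + x
  have hexp : Real.exp (x / 2) ≤ 1 + x := by
    have h4 : 1 - x / 2 ≤ Real.exp (-(x / 2)) := by
      have := Real.add_one_le_exp (-(x / 2)); linarith
    have e1 : Real.exp (x / 2) * Real.exp (-(x / 2)) = 1 := by
      rw [← Real.exp_add]; simp
    nlinarith [Real.exp_pos (-(x / 2)), Real.exp_pos (x / 2),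
      mul_le_mul_of_nonneg_left h4 (by linarith : (0:ℝ) ≤ 1 + x)]
  have hsq : Real.exp (x / 4) ^ 2 = Real.exp (x / 2) := by
    rw [sq, ← Real.exp_add]; congr 1; ring
  -- exp(x/4) * S ≤ η₁ + η₂
  have hkey : Real.exp (x / 4) * S ≤ η₁ + η₂ := by
    have h7 : (Real.exp (x / 4) * S) ^ 2 ≤ (η₁ + η₂) ^ 2 := by
      have h7a : (Real.exp (x / 4) * S) ^ 2 = Real.exp (x / 2) * S ^ 2 := by
        rw [mul_pow, hsq]
      nlinarith [mul_le_mul_of_nonneg_right hexp (sq_nonneg S)]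
    calc Real.exp (x / 4) * S = Real.sqrt ((Real.exp (x / 4) * S) ^ 2) :=
          (Real.sqrt_sq (by positivity)).symm
      _ ≤ Real.sqrt ((η₁ + η₂) ^ 2) := Real.sqrt_le_sqrt h7
      _ = η₁ + η₂ := Real.sqrt_sq (by positivity)
  have e2 : Real.exp (-(x / 4)) * Real.exp (x / 4) = 1 := by
    rw [← Real.exp_add]; simp
  have h9 : Real.exp (-(x / 4)) * (Real.exp (x / 4) * S) = S := by
    rw [← mul_assoc, e2, one_mul]
  have hc : S / ((m:ℝ) + 1) ≤ Real.exp (-(x / 4)) := by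
    rw [div_le_iff₀ hmpos]
    have h8 := mul_le_mul_of_nonneg_left (hkey.trans hm2.le) (Real.exp_pos (-(x / 4))).le
    linarith
  have hS' : S ≤ Real.exp (-(x / 4)) * (η₁ + η₂ + 1) := by
    have h8 := mul_le_mul_of_nonneg_left hkey (Real.exp_pos (-(x / 4))).le
    nlinarith [Real.exp_pos (-(x / 4))]
  -- rpow identities
  have h1σ : 1 - σ = s + 1 := by rw [hsdef]; ring
  have hσs : σ = -s := by rw [hsdef]; ring
  have hσ1 : σ - 1 = -(s + 1) := by rw [hsdef]; ring
  have hA : S ^ (1 - σ) * (((m:ℝ) + 1)) ^ σ = (S / ((m:ℝ) + 1)) ^ s * S := by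
    rw [h1σ, hσs, Real.rpow_add hS, Real.rpow_one, Real.rpow_neg hmpos.le,
        Real.div_rpow hS.le hmpos.le]
    ring
  have hB : S ^ (1 - σ) * (((m:ℝ) + 1)) ^ (σ - 1) = (S / ((m:ℝ) + 1)) ^ (s + 1) := by
    rw [h1σ, hσ1, Real.rpow_neg hmpos.le, Real.div_rpow hS.le hmpos.le, div_eq_mul_inv]
  have hcs : (S / ((m:ℝ) + 1)) ^ s ≤ Real.exp (-(x / 4) * s) :=
    (Real.rpow_le_rpow (by positivity) hc hs.le).trans_eq (Real.exp_mul _ _).symm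
  have hcs1 : (S / ((m:ℝ) + 1)) ^ (s + 1) ≤ Real.exp (-((s + 1) * x / 4)) := by
    refine (Real.rpow_le_rpow (by positivity) hc (by linarith)).trans_eq ?_
    rw [← Real.exp_mul]; congr 1; ring
  -- bound the two terms
  have t1 : (S / ((m:ℝ) + 1)) ^ s * S / s ≤
      Real.exp (-((s + 1) * x / 4)) * ((η₁ + η₂ + 1) / s) := by
    rw [mul_div_assoc]
    have p1 : (S / ((m:ℝ) + 1)) ^ s * S ≤
        Real.exp (-(x / 4) * s) * (Real.exp (-(x / 4)) * (η₁ + η₂ + 1)) :=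
      mul_le_mul hcs hS' hS.le (by positivity)
    have p2 : Real.exp (-(x / 4) * s) * (Real.exp (-(x / 4)) * (η₁ + η₂ + 1)) =
        Real.exp (-((s + 1) * x / 4)) * (η₁ + η₂ + 1) := by
      rw [← mul_assoc, ← Real.exp_add]; congr 2; ring
    rw [← mul_div_assoc]
    exact div_le_div_of_nonneg_right (p1.trans_eq p2) hs.le |>.trans_eq (mul_div_assoc _ _ _)
  -- assemble
  have hexpo : -2 * Real.pi * (η₁ ^ 2 * η₂ ^ 2) / (η₁ ^ 2 + η₂ ^ 2) = -((s + 1) * x / 4) := by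
    rw [hσ', hxdef]; field_simp; ring
  rw [mul_add, ← mul_div_assoc, hA, hB, ← hσ', hexpo]
  have heq : (1 + (η₁ + η₂ + 1) / s) * Real.exp (-((s + 1) * x / 4)) =
      Real.exp (-((s + 1) * x / 4)) * ((η₁ + η₂ + 1) / s) + Real.exp (-((s + 1) * x / 4)) := by
    ring
  rw [heq]
  exact add_le_add t1 hcs1
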